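/- Let G be a finite group and H ≤ G a subgroup such that every conjugacy class of G meets H. Then every complex character of G is a rational linear combination of characters induced from H (a special case of Artin's induction theorem for a single subgroup meeting all classes): two class functions on G agreeing on all induced characters' inner products with characters of H are equal, equivalently the induced characters from irreducible characters of H span the space of class functions of G over ℂ. -/

import Mathlib

open scoped Classical

/-- Induction of a class function from a subgroup `H` of a finite group `G`:
`(Ind f)(g) = |H|⁻¹ ∑_{x ∈ G} ḟ(x⁻¹ g x)`, where `ḟ` is `f` extended by zero
outside `H`. -/
noncomputable def indClassFun (G : Type*) [Group G] [Fintype G] (H : Subgroup G)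
    (f : H → ℂ) : G → ℂ := fun g =>
  (Nat.card H : ℂ)⁻¹ * ∑ x : G, if h : x⁻¹ * g * x ∈ H then f ⟨x⁻¹ * g * x, h⟩ else 0

/-- Artin's induction theorem for a single subgroup meeting all conjugacy classes:
if every conjugacy class of the finite group `G` meets the subgroup `H`, then every
class function on `G` (in particular every character) lies in the `ℂ`-span of the
class functions induced from `H`. -/
theorem artin_induction_single_subgroup (G : Type*) [Group G] [Fintype G]
    (H : Subgroup G) (hmeet : ∀ g : G, ∃ x : G, x⁻¹ * g * x ∈ H)
    (F : G → ℂ) (hF : ∀ x g : G, F (x * g * x⁻¹) = F g) :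
    F ∈ Submodule.span ℂ {F' : G → ℂ |
      ∃ f : H → ℂ, (∀ x g : H, f (x * g * x⁻¹) = f g) ∧ F' = indClassFun G H f} := by
  -- The number of x conjugating g into H
  set N : G → ℕ := fun g => (Finset.univ.filter (fun x : G => x⁻¹ * g * x ∈ H)).card with hNdef
  have hNpos : ∀ g : G, 0 < N g := by
    intro g
    obtain ⟨x, hx⟩ := hmeet g
    exact Finset.card_pos.mpr ⟨x, by simp [hNdef, hx]⟩
  have hNne : ∀ g : G, (N g : ℂ) ≠ 0 := fun g => by
    exact_mod_cast Nat.cast_ne_zero.mpr (hNpos g).ne'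
  have hNconj : ∀ y g : G, N (y⁻¹ * g * y) = N g := by
    intro y g
    apply Finset.card_bij (fun x _ => y * x)
    · intro x hx
      simp only [hNdef, Finset.mem_filter, Finset.mem_univ, true_and] at hx ⊢
      have : (y * x)⁻¹ * g * (y * x) = x⁻¹ * (y⁻¹ * g * y) * x := by group
      rw [this]; exact hx
    · intro a _ b _ hab
      exact mul_left_cancel hab
    · intro b hb
      refine ⟨y⁻¹ * b, ?_, by group⟩
      simp only [hNdef, Finset.mem_filter, Finset.mem_univ, true_and] at hb ⊢
      have : (y⁻¹ * b)⁻¹ * (y⁻¹ * g * y) * (y⁻¹ * b) = b⁻¹ * g * b := by group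
      rw [this]; exact hb
  have hFconj : ∀ x g : G, F (x⁻¹ * g * x) = F g := by
    intro x g
    have := hF x⁻¹ g
    simpa using this
  have hHne : ((Nat.card H : ℂ)) ≠ 0 := by
    exact_mod_cast Nat.cast_ne_zero.mpr Nat.card_pos.ne'
  set f : H → ℂ := fun k => F (k : G) * (Nat.card H : ℂ) / (N (k : G) : ℂ) with hfdef
  have hfclass : ∀ x g : H, f (x * g * x⁻¹) = f g := by
    intro x g
    simp only [hfdef, Subgroup.coe_mul, Subgroup.coe_inv]
    rw [show ((x : G) * g * (x : G)⁻¹) = ((x : G)⁻¹)⁻¹ * g * (x : G)⁻¹ by group,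
      hFconj, hNconj]
  have hFeq : F = indClassFun G H f := by
    funext g
    unfold indClassFun
    have hterm : ∀ x : G,
        (if h : x⁻¹ * g * x ∈ H then f ⟨x⁻¹ * g * x, h⟩ else 0)
          = (if x⁻¹ * g * x ∈ H then (1 : ℂ) else 0) *
            (F g * (Nat.card H : ℂ) / (N g : ℂ)) := by
      intro x
      by_cases h : x⁻¹ * g * x ∈ H
      · simp only [h, dif_pos, if_pos, one_mul, hfdef]
        rw [hFconj, hNconj]
      · simp [h]
    rw [Finset.sum_congr rfl (fun x _ => hterm x), ← Finset.sum_mul]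
    have hcount : (∑ x : G, if x⁻¹ * g * x ∈ H then (1 : ℂ) else 0) = (N g : ℂ) := by
      rw [Finset.sum_boole]
    rw [hcount]
    have hH2 : ((Fintype.card H : ℂ)) ≠ 0 := by
      exact_mod_cast Nat.cast_ne_zero.mpr Fintype.card_ne_zero
    rw [Nat.card_eq_fintype_card]
    field_simp
    rw [mul_div_assoc, div_self (hNne g), mul_one]
  rw [hFeq]
  exact Submodule.subset_span ⟨f, hfclass, rfl⟩
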